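/- Let 𝓒 and 𝓔 be finite index sets, let E be a nonzero complex 𝓔×𝓔 matrix, let T_1,…,T_ℓ and F_1,…,F_m be complex 𝓒×𝓔 matrices, let g : {1,…,m} → {1,…,ℓ} be injective, and let α_1,…,α_m be nonzero complex numbers such that T_{g(j)}ᵀ·F_j = α_j·E for all j ∈ {1,…,m} and T_hᵀ·F_j = 0 whenever h < g(j). Then rank(F_j) ≥ rank(E) for every j ∈ {1,…,m}, and the sum of the column spaces col(F_1) + ⋯ + col(F_m) has dimension at least m·rank(E). -/
import Mathlib


open Matrix

section Aux

variable {C E : Type} [Fintype C] [Fintype E]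

lemma mulVecLin_smul' (a : ℂ) (M : Matrix C E ℂ) :
    (a • M).mulVecLin = a • M.mulVecLin := by
  ext x i
  simp [Matrix.mulVecLin, Matrix.smul_mulVec]

lemma range_smul_mulVecLin (a : ℂ) (ha : a ≠ 0) (M : Matrix C E ℂ) :
    LinearMap.range (a • M).mulVecLin = LinearMap.range M.mulVecLin := by
  rw [mulVecLin_smul', LinearMap.range_smul _ _ ha]

/-- If `W ≤ V` and `W ≤ ker L`, then `finrank W + finrank (V.map L) ≤ finrank V`. -/
lemma finrank_add_map_le {K : Type*} [Field K] {M N : Type*} [AddCommGroup M] [Module K M]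
    [AddCommGroup N] [Module K N] [FiniteDimensional K M]
    (V W : Submodule K M) (L : M →ₗ[K] N) (hWV : W ≤ V) (hWK : W ≤ LinearMap.ker L) :
    Module.finrank K W + Module.finrank K (V.map L) ≤ Module.finrank K V := by
  classical
  set f : V →ₗ[K] N := L.comp V.subtype with hf
  have hrange : LinearMap.range f = V.map L := by
    rw [hf, LinearMap.range_comp, Submodule.range_subtype]
  have hker : Submodule.comap V.subtype W ≤ LinearMap.ker f := by
    intro x hx
    simp only [LinearMap.mem_ker, hf, LinearMap.comp_apply, Submodule.subtype_apply]
    exact hWK hx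
  have h1 : Module.finrank K W ≤ Module.finrank K (LinearMap.ker f) := by
    have := (Submodule.comapSubtypeEquivOfLe hWV).finrank_eq
    rw [← this]
    exact Submodule.finrank_mono hker
  have h2 := LinearMap.finrank_range_add_finrank_ker f
  rw [hrange] at h2
  omega

end Aux

/-- The triangular criterion: if `T_(g j)ᵀ · F j = α j • E` with `α j ≠ 0`, and
`T hᵀ · F j = 0` whenever `h < g j`, with `g` injective, then each `F j` has rank at
least `rank E` and the sum of the column spaces of the `F j` has dimension at least
`m · rank E`. -/
theorem triangular_criterion {C E : Type} [Fintype C] [Fintype E] (ℓ m : ℕ)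
    (Emat : Matrix E E ℂ) (hE : Emat ≠ 0)
    (T : Fin ℓ → Matrix C E ℂ) (Fm : Fin m → Matrix C E ℂ)
    (g : Fin m → Fin ℓ) (hg : Function.Injective g)
    (α : Fin m → ℂ) (hα : ∀ j, α j ≠ 0)
    (h1 : ∀ j : Fin m, (T (g j))ᵀ * Fm j = α j • Emat)
    (h2 : ∀ (j : Fin m) (h : Fin ℓ), h < g j → (T h)ᵀ * Fm j = 0) :
    (∀ j : Fin m, Emat.rank ≤ (Fm j).rank) ∧
    (m * Emat.rank ≤
      Module.finrank ℂ ↥(⨆ j : Fin m, LinearMap.range (Fm j).mulVecLin)) := by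
  classical
  have hrankE : ∀ j : Fin m, (α j • Emat).rank = Emat.rank := fun j => by
    unfold Matrix.rank
    rw [range_smul_mulVecLin _ (hα j)]
  constructor
  · intro j
    have := Matrix.rank_mul_le_right ((T (g j))ᵀ) (Fm j)
    rw [h1 j, hrankE j] at this
    exact this
  · -- auxiliary: over any finset s
    have aux : ∀ s : Finset (Fin m),
        s.card * Emat.rank ≤
          Module.finrank ℂ ↥(⨆ j ∈ s, LinearMap.range (Fm j).mulVecLin) := by
      intro s
      induction s using Finset.strongInduction with
      | _ s ih =>
        rcases s.eq_empty_or_nonempty with rfl | hne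
        · simp
        obtain ⟨j0, hj0s, hmin⟩ := Finset.exists_min_image s g hne
        set L : (C → ℂ) →ₗ[ℂ] (E → ℂ) := ((T (g j0))ᵀ).mulVecLin with hL
        set V : Submodule ℂ (C → ℂ) := ⨆ j ∈ s, LinearMap.range (Fm j).mulVecLin with hV
        set W : Submodule ℂ (C → ℂ) :=
          ⨆ j ∈ s.erase j0, LinearMap.range (Fm j).mulVecLin with hW
        have hWV : W ≤ V := by
          apply iSup_le; intro j; apply iSup_le; intro hj
          exact le_iSup₂ (f := fun j _ => LinearMap.range (Fm j).mulVecLin) j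
            (Finset.mem_of_mem_erase hj)
        have hWK : W ≤ LinearMap.ker L := by
          apply iSup_le; intro j; apply iSup_le; intro hj
          have hjs : j ∈ s := Finset.mem_of_mem_erase hj
          have hjne : j ≠ j0 := Finset.ne_of_mem_erase hj
          have hlt : g j0 < g j :=
            lt_of_le_of_ne (hmin j hjs) (fun h => hjne (hg h.symm))
          have hzero : (T (g j0))ᵀ * Fm j = 0 := h2 j (g j0) hlt
          rintro _ ⟨x, rfl⟩
          have : L ((Fm j).mulVecLin x) = ((T (g j0))ᵀ * Fm j).mulVecLin x := by
            rw [Matrix.mulVecLin_mul]; rfl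
          simp only [LinearMap.mem_ker, this, hzero, Matrix.mulVecLin_zero,
            LinearMap.zero_apply]
        have hmap : Emat.rank ≤ Module.finrank ℂ (V.map L) := by
          have hsub : LinearMap.range Emat.mulVecLin ≤ V.map L := by
            have h0 : LinearMap.range (Fm j0).mulVecLin ≤ V :=
              le_iSup₂ (f := fun j _ => LinearMap.range (Fm j).mulVecLin) j0 hj0s
            have : (LinearMap.range (Fm j0).mulVecLin).map L ≤ V.map L :=
              Submodule.map_mono h0
            refine le_trans ?_ this
            rw [← LinearMap.range_comp]
            have hcomp : L.comp (Fm j0).mulVecLin = ((T (g j0))ᵀ * Fm j0).mulVecLin := by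
              rw [Matrix.mulVecLin_mul]
            rw [hcomp, h1 j0, range_smul_mulVecLin _ (hα j0)]
          calc Emat.rank = Module.finrank ℂ (LinearMap.range Emat.mulVecLin) := rfl
            _ ≤ Module.finrank ℂ (V.map L) := Submodule.finrank_mono hsub
        have key := finrank_add_map_le V W L hWV hWK
        have hih := ih (s.erase j0) (Finset.erase_ssubset hj0s)
        have hcard : s.card = (s.erase j0).card + 1 := by
          have hpos := Finset.card_pos.mpr hne
          rw [Finset.card_erase_of_mem hj0s]
          omega
        calc s.card * Emat.rank = (s.erase j0).card * Emat.rank + Emat.rank := by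
              rw [hcard]; ring
          _ ≤ Module.finrank ℂ W + Module.finrank ℂ (V.map L) := add_le_add hih hmap
          _ ≤ Module.finrank ℂ V := key
    have := aux Finset.univ
    rw [Finset.card_univ, Fintype.card_fin] at this
    have heq : (⨆ j ∈ (Finset.univ : Finset (Fin m)), LinearMap.range (Fm j).mulVecLin)
        = ⨆ j : Fin m, LinearMap.range (Fm j).mulVecLin := by simp
    rw [heq] at this
    exact this
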